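/- (Thermodynamic bound on the evolution of an environmental observable.) Let G_E ∈ M_M(ℂ) be Hermitian with G_E f_0 = g_0 f_0 for some real g_0, let G = I_n ⊗ I_n ⊗ G_E, and let g_max ≥ 0 satisfy ‖G_E x‖ ≤ g_max ‖x‖ for all x ∈ ℂ^M. Then |⟨G⟩ − g_0| ≤ √(g_max² · Ξ), i.e. (⟨G⟩ − g_0)² ≤ g_max² · Ξ, where ⟨G⟩ is the expectation of G in the final pure state Ψ_T and Ξ is the survival activity. -/

import Mathlib

open Matrix Kronecker Finset

noncomputable section

/-- Tensor product of two vectors. -/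
def tvec {α β : Type*} (x : α → ℂ) (y : β → ℂ) : α × β → ℂ :=
  fun q => x q.1 * y q.2

/-- Standard basis vector `f_m` of the environment `ℂ^(M+1)`. -/
def stdv (M : ℕ) (m : Fin (M + 1)) : Fin (M + 1) → ℂ :=
  fun k => if k = m then 1 else 0

variable {n M : ℕ}

/-- The final pure state `Ψ_T = ∑_{i,m} √p_i ψ_i ⊗ (V_m ψ_i) ⊗ f_m` of R+S+E. -/
def PsiT (ψ : Fin n → Fin n → ℂ) (p : Fin n → ℝ)
    (V : Fin (M + 1) → Matrix (Fin n) (Fin n) ℂ) :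
    (Fin n × Fin n) × Fin (M + 1) → ℂ :=
  ∑ i, ∑ m, ((Real.sqrt (p i) : ℂ) • tvec (tvec (ψ i) (V m *ᵥ ψ i)) (stdv M m))

/-- The unnormalized vector `Ψ̃_0 = ∑_i √p_i ψ_i ⊗ ((V_0†)⁻¹ ψ_i) ⊗ f_0`. -/
def PsiTilde0 (ψ : Fin n → Fin n → ℂ) (p : Fin n → ℝ)
    (V : Fin (M + 1) → Matrix (Fin n) (Fin n) ℂ) :
    (Fin n × Fin n) × Fin (M + 1) → ℂ :=
  ∑ i, ((Real.sqrt (p i) : ℂ) • tvec (tvec (ψ i) ((((V 0)ᴴ)⁻¹) *ᵥ ψ i)) (stdv M 0))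

/-- The initial density matrix `ρ = ∑_i p_i ψ_i ψ_i†` of the principal system S. -/
def rho (ψ : Fin n → Fin n → ℂ) (p : Fin n → ℝ) : Matrix (Fin n) (Fin n) ℂ :=
  ∑ i, ((p i : ℂ) • vecMulVec (ψ i) (star (ψ i)))

/-- Expectation value `⟨G⟩ = ⟨Ψ, G Ψ⟩` (its real part, which is all of it for Hermitian `G`). -/
def expval {ι : Type*} [Fintype ι] (G : Matrix ι ι ℂ) (Ψ : ι → ℂ) : ℝ :=
  (star Ψ ⬝ᵥ (G *ᵥ Ψ)).re

/-- Variance `Var[G] = ⟨Ψ, G² Ψ⟩ − ⟨G⟩²`. -/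
def variance {ι : Type*} [Fintype ι] (G : Matrix ι ι ℂ) (Ψ : ι → ℂ) : ℝ :=
  expval (G * G) Ψ - (expval G Ψ) ^ 2

/-- The survival activity `Ξ = Tr[ρ (V_0† V_0)⁻¹] − 1`. -/
def survivalActivity (ψ : Fin n → Fin n → ℂ) (p : Fin n → ℝ)
    (V : Fin (M + 1) → Matrix (Fin n) (Fin n) ℂ) : ℝ :=
  ((rho ψ p * ((V 0)ᴴ * V 0)⁻¹).trace).re - 1

/-! ### Auxiliary lemmas -/

section AuxHelpers

set_option linter.unusedSectionVars false

variable {α β : Type*} [Fintype α] [Fintype β]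

lemma star_tvec (a : α → ℂ) (b : β → ℂ) : star (tvec a b) = tvec (star a) (star b) := by
  ext q; simp [tvec]

lemma tvec_dot (a c : α → ℂ) (b d : β → ℂ) :
    star (tvec a b) ⬝ᵥ tvec c d = (star a ⬝ᵥ c) * (star b ⬝ᵥ d) := by
  rw [star_tvec]
  simp only [dotProduct, tvec, Fintype.sum_prod_type, Finset.sum_mul, Finset.mul_sum]
  rw [Finset.sum_comm]
  exact Finset.sum_congr rfl fun i _ => Finset.sum_congr rfl fun j _ => by ring

lemma kron_mulVec [DecidableEq α] [DecidableEq β] (A : Matrix α α ℂ) (B : Matrix β β ℂ)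
    (x : α → ℂ) (y : β → ℂ) :
    (A ⊗ₖ B) *ᵥ tvec x y = tvec (A *ᵥ x) (B *ᵥ y) := by
  ext ⟨i, k⟩
  simp only [Matrix.mulVec, dotProduct, tvec, kroneckerMap_apply, Fintype.sum_prod_type,
    Finset.sum_mul, Finset.mul_sum]
  rw [Finset.sum_comm]
  exact Finset.sum_congr rfl fun a _ => Finset.sum_congr rfl fun b _ => by ring

lemma adjoint_dot (A B : Matrix α α ℂ) (x y : α → ℂ) :
    star (A *ᵥ x) ⬝ᵥ (B *ᵥ y) = star x ⬝ᵥ ((Aᴴ * B) *ᵥ y) := by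
  rw [star_mulVec, dotProduct_mulVec, vecMul_vecMul, ← dotProduct_mulVec]

lemma stdv_dot {M : ℕ} (m m' : Fin (M + 1)) :
    star (stdv M m) ⬝ᵥ stdv M m' = if m = m' then (1 : ℂ) else 0 := by
  simp [stdv, dotProduct, apply_ite, Finset.sum_ite_eq', eq_comm]

lemma dot_self_re (u : α → ℂ) : (star u ⬝ᵥ u).re = ∑ k, ‖u k‖ ^ 2 := by
  rw [dotProduct, Complex.re_sum]
  refine Finset.sum_congr rfl fun k _ => ?_
  simp [Pi.star_apply, mul_comm, Complex.mul_conj, Complex.sq_norm]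

lemma dot_self_re_nonneg (u : α → ℂ) : 0 ≤ (star u ⬝ᵥ u).re := by
  rw [dot_self_re]
  exact Finset.sum_nonneg fun k _ => sq_nonneg _

lemma sum_dot {ι : Type*} (s : Finset ι) (f : ι → α → ℂ) (v : α → ℂ) :
    (∑ i ∈ s, f i) ⬝ᵥ v = ∑ i ∈ s, (f i ⬝ᵥ v) := by
  simp only [dotProduct, Finset.sum_apply, Finset.sum_mul]
  exact Finset.sum_comm

lemma dot_sum {ι : Type*} (s : Finset ι) (v : α → ℂ) (f : ι → α → ℂ) :
    v ⬝ᵥ (∑ i ∈ s, f i) = ∑ i ∈ s, (v ⬝ᵥ f i) := by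
  simp only [dotProduct, Finset.sum_apply, Finset.mul_sum]
  exact Finset.sum_comm

lemma mulVec_sum' {ι : Type*} (s : Finset ι) (A : Matrix α α ℂ) (f : ι → α → ℂ) :
    A *ᵥ (∑ i ∈ s, f i) = ∑ i ∈ s, A *ᵥ f i := by
  ext j
  simp only [Matrix.mulVec, dotProduct, Finset.sum_apply, Finset.mul_sum]
  exact Finset.sum_comm

lemma sum_mulVec' {ι : Type*} (s : Finset ι) (A : ι → Matrix α α ℂ) (x : α → ℂ) :
    (∑ m ∈ s, A m) *ᵥ x = ∑ m ∈ s, A m *ᵥ x := by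
  ext j
  simp only [Matrix.mulVec, dotProduct, Matrix.sum_apply, Finset.sum_mul, Finset.sum_apply]
  rw [Finset.sum_comm]

lemma cs_dot {ι : Type*} [Fintype ι] (u v : ι → ℂ) :
    ‖star u ⬝ᵥ v‖ ^ 2 ≤ (star u ⬝ᵥ u).re * (star v ⬝ᵥ v).re := by
  let u' : EuclideanSpace ℂ ι := (WithLp.equiv 2 _).symm u
  let v' : EuclideanSpace ℂ ι := (WithLp.equiv 2 _).symm v
  have h1 : (inner ℂ u' v' : ℂ) = star u ⬝ᵥ v := by rw [dotProduct_comm]; rfl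
  have h2 : ((inner ℂ u' u' : ℂ)).re = (star u ⬝ᵥ u).re := by
    rw [dotProduct_comm]; rfl
  have h3 : ((inner ℂ v' v' : ℂ)).re = (star v ⬝ᵥ v).re := by
    rw [dotProduct_comm]; rfl
  have hcs := norm_inner_le_norm (𝕜 := ℂ) u' v'
  have hsq := pow_le_pow_left₀ (norm_nonneg _) hcs 2
  rw [mul_pow] at hsq
  have h4 : (inner ℂ u' u' : ℂ).re = ‖u'‖ ^ 2 := by
    have := inner_self_eq_norm_sq (𝕜 := ℂ) u'; simpa using this
  have h5 : (inner ℂ v' v' : ℂ).re = ‖v'‖ ^ 2 := by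
    have := inner_self_eq_norm_sq (𝕜 := ℂ) v'; simpa using this
  rw [← h1, ← h2, ← h3, h4, h5]
  simpa using hsq

lemma trace_vecMulVec_mul (x y : α → ℂ) (B : Matrix α α ℂ) :
    (vecMulVec x y * B).trace = y ⬝ᵥ (B *ᵥ x) := by
  simp only [Matrix.trace, Matrix.diag, Matrix.mul_apply, vecMulVec_apply, dotProduct,
    Matrix.mulVec, Finset.mul_sum]
  rw [Finset.sum_comm]
  exact Finset.sum_congr rfl fun i _ => Finset.sum_congr rfl fun j _ => by ring

end AuxHelpers

lemma trace_rho_mul (ψ : Fin n → Fin n → ℂ) (p : Fin n → ℝ) (B : Matrix (Fin n) (Fin n) ℂ) :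
    (rho ψ p * B).trace = ∑ i, (p i : ℂ) * (star (ψ i) ⬝ᵥ (B *ᵥ ψ i)) := by
  rw [rho, Finset.sum_mul, trace_sum]
  exact Finset.sum_congr rfl fun i _ => by
    rw [smul_mul_assoc, trace_smul, trace_vecMulVec_mul, smul_eq_mul]

section MainAux

variable (ψ : Fin n → Fin n → ℂ) (p : Fin n → ℝ)
  (V : Fin (M + 1) → Matrix (Fin n) (Fin n) ℂ)

lemma psiT_dot_psiT
    (hortho : ∀ i j, star (ψ i) ⬝ᵥ ψ j = if i = j then (1 : ℂ) else 0)
    (hp1 : ∑ i, p i = 1)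
    (hKraus : ∑ m, (V m)ᴴ * V m = 1)
    (hc : ∀ i, (starRingEnd ℂ) ((Real.sqrt (p i) : ℂ)) * (Real.sqrt (p i) : ℂ) = (p i : ℂ)) :
    star (PsiT ψ p V) ⬝ᵥ PsiT ψ p V = 1 := by
  unfold PsiT
  have hTT : ∀ i m j m', star (tvec (tvec (ψ i) (V m *ᵥ ψ i)) (stdv M m))
      ⬝ᵥ tvec (tvec (ψ j) (V m' *ᵥ ψ j)) (stdv M m')
      = (if i = j then (1:ℂ) else 0) * (star (ψ i) ⬝ᵥ (((V m)ᴴ * V m') *ᵥ ψ j))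
        * (if m = m' then (1:ℂ) else 0) := by
    intro i m j m'
    rw [tvec_dot, tvec_dot, stdv_dot, hortho, adjoint_dot]
  simp only [star_sum, star_smul, sum_dot, dot_sum, smul_dotProduct, dotProduct_smul,
    smul_eq_mul, hTT, star_trivial]
  simp only [mul_ite, ite_mul, mul_zero, zero_mul, mul_one, one_mul,
    Finset.sum_ite_eq, Finset.sum_ite_eq', Finset.mem_univ, if_true]
  have h1 : ∀ i, ∑ m, ((Real.sqrt (p i) : ℂ)) * (star ((Real.sqrt (p i) : ℂ)) *
      (star (ψ i) ⬝ᵥ (((V m)ᴴ * V m) *ᵥ ψ i))) = (p i : ℂ) := by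
    intro i
    rw [← Finset.mul_sum, ← Finset.mul_sum, ← dot_sum, ← sum_mulVec', hKraus, one_mulVec,
      hortho i i]
    simp only [if_true, mul_one, Complex.star_def]
    rw [mul_comm, hc i]
  simp only [h1]
  norm_cast

lemma psiTilde0_dot_psiT
    (hortho : ∀ i j, star (ψ i) ⬝ᵥ ψ j = if i = j then (1 : ℂ) else 0)
    (hp1 : ∑ i, p i = 1)
    (hdet : IsUnit (V 0).det)
    (hc : ∀ i, (starRingEnd ℂ) ((Real.sqrt (p i) : ℂ)) * (Real.sqrt (p i) : ℂ) = (p i : ℂ)) :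
    star (PsiTilde0 ψ p V) ⬝ᵥ PsiT ψ p V = 1 := by
  unfold PsiT PsiTilde0
  have hW : (((V 0)ᴴ)⁻¹)ᴴ * V 0 = 1 := by
    rw [conjTranspose_nonsing_inv, conjTranspose_conjTranspose, nonsing_inv_mul _ hdet]
  have hTT : ∀ i j m, star (tvec (tvec (ψ i) ((((V 0)ᴴ)⁻¹) *ᵥ ψ i)) (stdv M 0))
      ⬝ᵥ tvec (tvec (ψ j) (V m *ᵥ ψ j)) (stdv M m)
      = (if i = j then (1:ℂ) else 0) * (star (ψ i) ⬝ᵥ (((((V 0)ᴴ)⁻¹)ᴴ * V m) *ᵥ ψ j))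
        * (if (0 : Fin (M+1)) = m then (1:ℂ) else 0) := by
    intro i j m
    rw [tvec_dot, tvec_dot, stdv_dot, hortho, adjoint_dot]
  simp only [star_sum, star_smul, sum_dot, dot_sum, smul_dotProduct, dotProduct_smul,
    smul_eq_mul, hTT, star_trivial]
  simp only [mul_ite, ite_mul, mul_zero, zero_mul, mul_one, one_mul, Finset.sum_ite_irrel,
    Finset.sum_const_zero, Finset.sum_ite_eq, Finset.sum_ite_eq', Finset.mem_univ, if_true]
  simp only [hW, one_mulVec, hortho, eq_self_iff_true, if_true]
  have h1 : ∀ i, ((Real.sqrt (p i) : ℂ)) * (star ((Real.sqrt (p i) : ℂ)) * (1:ℂ)) = (p i : ℂ) := by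
    intro i
    simp only [mul_one, Complex.star_def]
    rw [mul_comm, hc i]
  simp only [h1]
  norm_cast

lemma psiTilde0_dot_psiTilde0
    (hortho : ∀ i j, star (ψ i) ⬝ᵥ ψ j = if i = j then (1 : ℂ) else 0)
    (hdet : IsUnit (V 0).det)
    (hc : ∀ i, (starRingEnd ℂ) ((Real.sqrt (p i) : ℂ)) * (Real.sqrt (p i) : ℂ) = (p i : ℂ)) :
    star (PsiTilde0 ψ p V) ⬝ᵥ PsiTilde0 ψ p V = (rho ψ p * ((V 0)ᴴ * V 0)⁻¹).trace := by
  unfold PsiTilde0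
  have hW : (((V 0)ᴴ)⁻¹)ᴴ * ((V 0)ᴴ)⁻¹ = ((V 0)ᴴ * V 0)⁻¹ := by
    rw [conjTranspose_nonsing_inv, conjTranspose_conjTranspose, Matrix.mul_inv_rev]
  have hTT : ∀ i j, star (tvec (tvec (ψ i) ((((V 0)ᴴ)⁻¹) *ᵥ ψ i)) (stdv M 0))
      ⬝ᵥ tvec (tvec (ψ j) ((((V 0)ᴴ)⁻¹) *ᵥ ψ j)) (stdv M 0)
      = (if i = j then (1:ℂ) else 0) * (star (ψ i) ⬝ᵥ ((((V 0)ᴴ * V 0)⁻¹) *ᵥ ψ j)) := by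
    intro i j
    rw [tvec_dot, tvec_dot, stdv_dot, hortho, adjoint_dot, hW]
    simp
  rw [trace_rho_mul]
  simp only [star_sum, star_smul, sum_dot, dot_sum, smul_dotProduct, dotProduct_smul,
    smul_eq_mul, hTT, star_trivial]
  simp only [mul_ite, ite_mul, mul_zero, zero_mul, mul_one, one_mul, Finset.sum_ite_irrel,
    Finset.sum_const_zero, Finset.sum_ite_eq, Finset.sum_ite_eq', Finset.mem_univ, if_true]
  refine Finset.sum_congr rfl fun i _ => ?_
  rw [Complex.star_def, ← mul_assoc, mul_comm ((Real.sqrt (p i) : ℂ)), hc i]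

lemma bigG_mulVec_psiTilde0
    (GE : Matrix (Fin (M + 1)) (Fin (M + 1)) ℂ)
    (g0 : ℝ) (hg0 : GE *ᵥ stdv M 0 = (g0 : ℂ) • stdv M 0) :
    (((1 : Matrix (Fin n) (Fin n) ℂ) ⊗ₖ (1 : Matrix (Fin n) (Fin n) ℂ)) ⊗ₖ GE) *ᵥ
      PsiTilde0 ψ p V = (g0 : ℂ) • PsiTilde0 ψ p V := by
  unfold PsiTilde0
  rw [mulVec_sum', Finset.smul_sum]
  refine Finset.sum_congr rfl fun i _ => ?_
  rw [mulVec_smul, kron_mulVec, one_kronecker_one, one_mulVec, hg0, smul_comm]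
  congr 1
  ext ⟨r, k⟩
  simp only [tvec, Pi.smul_apply, smul_eq_mul]
  ring

lemma bigG_hermitian (GE : Matrix (Fin (M + 1)) (Fin (M + 1)) ℂ) (hGE : GE.IsHermitian) :
    ((((1 : Matrix (Fin n) (Fin n) ℂ) ⊗ₖ (1 : Matrix (Fin n) (Fin n) ℂ)) ⊗ₖ GE))ᴴ
      = (((1 : Matrix (Fin n) (Fin n) ℂ) ⊗ₖ (1 : Matrix (Fin n) (Fin n) ℂ)) ⊗ₖ GE) := by
  ext ⟨⟨i, j⟩, k⟩ ⟨⟨i', j'⟩, k'⟩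
  simp only [conjTranspose_apply, kroneckerMap_apply, one_apply, star_mul', apply_ite,
    star_one, star_zero, ite_mul, one_mul, zero_mul, mul_ite, mul_zero, hGE.apply]
  by_cases h1 : i = i' <;> by_cases h2 : j = j' <;> simp [h1, h2, eq_comm, hGE.apply]

lemma bigG_norm_bound
    (GE : Matrix (Fin (M + 1)) (Fin (M + 1)) ℂ)
    (gmax : ℝ)
    (hgmax : ∀ x : Fin (M + 1) → ℂ,
      Real.sqrt (∑ k, ‖(GE *ᵥ x) k‖ ^ 2)
        ≤ gmax * Real.sqrt (∑ k, ‖x k‖ ^ 2))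
    (Ψ : (Fin n × Fin n) × Fin (M + 1) → ℂ)
    (hΨΨ : star Ψ ⬝ᵥ Ψ = 1) :
    (star ((((1 : Matrix (Fin n) (Fin n) ℂ) ⊗ₖ (1 : Matrix (Fin n) (Fin n) ℂ)) ⊗ₖ GE) *ᵥ Ψ)
      ⬝ᵥ ((((1 : Matrix (Fin n) (Fin n) ℂ) ⊗ₖ (1 : Matrix (Fin n) (Fin n) ℂ)) ⊗ₖ GE) *ᵥ Ψ)).re
      ≤ gmax ^ 2 := by
  have happly : ∀ (u : (Fin n × Fin n) × Fin (M + 1) → ℂ) (r : Fin n × Fin n) (k : Fin (M + 1)),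
      (((((1 : Matrix (Fin n) (Fin n) ℂ) ⊗ₖ (1 : Matrix (Fin n) (Fin n) ℂ)) ⊗ₖ GE) *ᵥ u)) (r, k)
        = (GE *ᵥ fun k' => u (r, k')) k := by
    intro u r k
    rw [one_kronecker_one]
    simp only [Matrix.mulVec, dotProduct, kroneckerMap_apply, Fintype.sum_prod_type, one_apply,
      ite_mul, one_mul, zero_mul, Finset.sum_ite_irrel, Finset.sum_const_zero,
      Finset.sum_ite_eq, Finset.mem_univ, if_true]
  have hsq : ∀ x : Fin (M + 1) → ℂ, ∑ k, ‖(GE *ᵥ x) k‖ ^ 2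
      ≤ gmax ^ 2 * ∑ k, ‖x k‖ ^ 2 := by
    intro x
    have h1 : (0:ℝ) ≤ ∑ k, ‖(GE *ᵥ x) k‖ ^ 2 :=
      Finset.sum_nonneg fun k _ => sq_nonneg _
    have h2 : (0:ℝ) ≤ ∑ k, ‖x k‖ ^ 2 :=
      Finset.sum_nonneg fun k _ => sq_nonneg _
    have h := pow_le_pow_left₀ (Real.sqrt_nonneg _) (hgmax x) 2
    rwa [Real.sq_sqrt h1, mul_pow, Real.sq_sqrt h2] at h
  rw [dot_self_re, Fintype.sum_prod_type]
  have hre1 : (star Ψ ⬝ᵥ Ψ).re = 1 := by rw [hΨΨ]; rfl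
  calc ∑ r : Fin n × Fin n, ∑ k, ‖
        (((((1 : Matrix (Fin n) (Fin n) ℂ) ⊗ₖ 1) ⊗ₖ GE) *ᵥ Ψ)) (r, k)‖ ^ 2
      = ∑ r : Fin n × Fin n, ∑ k, ‖(GE *ᵥ fun k' => Ψ (r, k')) k‖ ^ 2 := by
        refine Finset.sum_congr rfl fun r _ => Finset.sum_congr rfl fun k _ => ?_
        rw [happly]
    _ ≤ ∑ r : Fin n × Fin n, gmax ^ 2 * ∑ k, ‖Ψ (r, k)‖ ^ 2 :=
        Finset.sum_le_sum fun r _ => hsq _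
    _ = gmax ^ 2 * ∑ r : Fin n × Fin n, ∑ k, ‖Ψ (r, k)‖ ^ 2 := by
        rw [Finset.mul_sum]
    _ = gmax ^ 2 * (star Ψ ⬝ᵥ Ψ).re := by
        rw [dot_self_re]; simp only [Fintype.sum_prod_type]
    _ = gmax ^ 2 := by rw [hre1, mul_one]

end MainAux

/-- **Thermodynamic bound on the evolution of an environmental observable.** -/
theorem env_observable_evolution_bound
    (ψ : Fin n → Fin n → ℂ)
    (hortho : ∀ i j, star (ψ i) ⬝ᵥ ψ j = if i = j then (1 : ℂ) else 0)
    (p : Fin n → ℝ) (hp : ∀ i, 0 ≤ p i) (hp1 : ∑ i, p i = 1)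
    (V : Fin (M + 1) → Matrix (Fin n) (Fin n) ℂ)
    (hKraus : ∑ m, (V m)ᴴ * V m = 1)
    (hV0 : IsUnit (V 0))
    (GE : Matrix (Fin (M + 1)) (Fin (M + 1)) ℂ) (hGE : GE.IsHermitian)
    (g0 : ℝ) (hg0 : GE *ᵥ stdv M 0 = (g0 : ℂ) • stdv M 0)
    (gmax : ℝ) (hgmax0 : 0 ≤ gmax)
    (hgmax : ∀ x : Fin (M + 1) → ℂ,
      Real.sqrt (∑ k, ‖(GE *ᵥ x) k‖ ^ 2)
        ≤ gmax * Real.sqrt (∑ k, ‖x k‖ ^ 2)) :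
    (expval (((1 : Matrix (Fin n) (Fin n) ℂ) ⊗ₖ (1 : Matrix (Fin n) (Fin n) ℂ)) ⊗ₖ GE)
        (PsiT ψ p V) - g0) ^ 2
      ≤ gmax ^ 2 * survivalActivity ψ p V := by
  classical
  set G : Matrix ((Fin n × Fin n) × Fin (M + 1)) ((Fin n × Fin n) × Fin (M + 1)) ℂ :=
    ((1 : Matrix (Fin n) (Fin n) ℂ) ⊗ₖ (1 : Matrix (Fin n) (Fin n) ℂ)) ⊗ₖ GE with hG
  set Ψ : (Fin n × Fin n) × Fin (M + 1) → ℂ := PsiT ψ p V with hΨdef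
  set Φ : (Fin n × Fin n) × Fin (M + 1) → ℂ := PsiTilde0 ψ p V with hΦdef
  have hdet : IsUnit (V 0).det := (Matrix.isUnit_iff_isUnit_det _).mp hV0
  have hc : ∀ i, (starRingEnd ℂ) ((Real.sqrt (p i) : ℂ)) * (Real.sqrt (p i) : ℂ) = (p i : ℂ) := by
    intro i
    rw [Complex.conj_ofReal, ← Complex.ofReal_mul, Real.mul_self_sqrt (hp i)]
  have hΨΨ : star Ψ ⬝ᵥ Ψ = 1 := psiT_dot_psiT ψ p V hortho hp1 hKraus hc
  have hΦΨ : star Φ ⬝ᵥ Ψ = 1 := psiTilde0_dot_psiT ψ p V hortho hp1 hdet hc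
  have hΦΦ : star Φ ⬝ᵥ Φ = (rho ψ p * ((V 0)ᴴ * V 0)⁻¹).trace :=
    psiTilde0_dot_psiTilde0 ψ p V hortho hdet hc
  have hGΦ : G *ᵥ Φ = (g0 : ℂ) • Φ := bigG_mulVec_psiTilde0 ψ p V GE g0 hg0
  have hGH : Gᴴ = G := bigG_hermitian GE hGE
  have hΦGΨ : star Φ ⬝ᵥ (G *ᵥ Ψ) = (g0 : ℂ) := by
    rw [dotProduct_mulVec, ← hGH, ← star_mulVec, hGΦ, star_smul, smul_dotProduct, hΦΨ]
    simp [Complex.conj_ofReal]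
  set D : (Fin n × Fin n) × Fin (M + 1) → ℂ := Ψ - Φ with hD
  have hΨΦ : star Ψ ⬝ᵥ Φ = 1 := by
    rw [star_dotProduct, hΦΨ]; simp
  have hDD : star D ⬝ᵥ D = (star Φ ⬝ᵥ Φ) - 1 := by
    simp only [hD, star_sub, sub_dotProduct, dotProduct_sub, hΨΨ, hΦΨ, hΨΦ]
    ring
  have hDGΨ : star D ⬝ᵥ (G *ᵥ Ψ) = star Ψ ⬝ᵥ (G *ᵥ Ψ) - (g0 : ℂ) := by
    simp only [hD, star_sub, sub_dotProduct, hΦGΨ]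
  have hXi : survivalActivity ψ p V = (star D ⬝ᵥ D).re := by
    rw [hDD, hΦΦ]; simp [survivalActivity]
  have hXi0 : 0 ≤ survivalActivity ψ p V := by
    rw [hXi]; exact dot_self_re_nonneg D
  have hGΨnorm : (star (G *ᵥ Ψ) ⬝ᵥ (G *ᵥ Ψ)).re ≤ gmax ^ 2 :=
    bigG_norm_bound GE gmax hgmax Ψ hΨΨ
  have key := cs_dot D (G *ᵥ Ψ)
  rw [hDGΨ] at key
  have h1 : expval G Ψ - g0 = (star Ψ ⬝ᵥ (G *ᵥ Ψ) - (g0 : ℂ)).re := by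
    simp [expval]
  rw [h1]
  have h2 : ((star Ψ ⬝ᵥ (G *ᵥ Ψ) - (g0 : ℂ)).re) ^ 2
      ≤ ‖star Ψ ⬝ᵥ (G *ᵥ Ψ) - (g0 : ℂ)‖ ^ 2 := by
    have h := pow_le_pow_left₀ (abs_nonneg _)
      (Complex.abs_re_le_norm (star Ψ ⬝ᵥ (G *ᵥ Ψ) - (g0 : ℂ))) 2
    rwa [sq_abs] at h
  refine h2.trans (key.trans ?_)
  calc (star D ⬝ᵥ D).re * (star (G *ᵥ Ψ) ⬝ᵥ (G *ᵥ Ψ)).re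
      ≤ (star D ⬝ᵥ D).re * gmax ^ 2 :=
        mul_le_mul_of_nonneg_left hGΨnorm (dot_self_re_nonneg D)
    _ = gmax ^ 2 * survivalActivity ψ p V := by rw [hXi]; ring
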